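/- Let d ≥ 3 and p ≥ n > d/2 be real. Consider on the torus T^d the divergence-free mean-zero fields v := i·e₂ (e_{a} − e_{−a}) and w := i·e₃ (e_{b} − e_{−b}), where a, b are the first two standard basis vectors of ℤ^d, e₂, e₃ the second and third standard basis vectors of ℝ^d, and e_k(x) := e^{i k·x}/(2π)^{d/2}. Then ‖v‖_m = ‖w‖_m = √2 for every real m, and the Leray-projected advection P(v,w) := Π(v·∂w) satisfies ‖P(v,w)‖_p = 2^{p/2+1}/(2π)^{d/2}. Consequently the sharp constant K_{pn} in the tame inequality ‖P(v,w)‖_p ≤ (K_{pn}/2)(‖v‖_p‖w‖_{n+1} + ‖v‖_n‖w‖_{p+1}) satisfies K_{pn} ≥ 2^{p/2}/(2π)^{d/2}. -/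

import Mathlib

open scoped BigOperators
noncomputable section

/-- Euclidean norm of a lattice point of `ℤ^d`. -/
def latNorm {d : ℕ} (k : Fin d → ℤ) : ℝ := Real.sqrt (∑ i, ((k i : ℝ)) ^ 2)

/-- Euclidean norm of a vector of `ℂ^d`. -/
def cNorm {d : ℕ} (a : Fin d → ℂ) : ℝ := Real.sqrt (∑ i, ‖a i‖ ^ 2)

/-- A divergence-free mean-zero vector field on the torus `T^d = (ℝ/2πℤ)^d` is represented
by the family of its Fourier coefficients `v_k ∈ ℂ^d`, `k ∈ ℤ^d`. -/
def Coeff (d : ℕ) := (Fin d → ℤ) → (Fin d → ℂ)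

/-- Bilinear dot product `k · a` of a lattice vector with a vector of `ℂ^d`. -/
def dotC {d : ℕ} (k : Fin d → ℤ) (a : Fin d → ℂ) : ℂ := ∑ i, (k i : ℂ) * a i

/-- The projection `Π_k` of `ℂ^d` onto `k^⊥`: `Π_k c = c - ((k·c)/|k|²) k` for `k ≠ 0`,
and `Π_0 c = c`. -/
def leray {d : ℕ} (k : Fin d → ℤ) (a : Fin d → ℂ) : Fin d → ℂ :=
  if k = 0 then a else fun i => a i - dotC k a / (latNorm k : ℂ) ^ 2 * (k i : ℂ)

/-- The Sobolev norm of order `m`: `‖v‖_m² = Σ_{k ≠ 0} |k|^{2m} |v_k|²`. -/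
def sobNorm {d : ℕ} (m : ℝ) (v : Coeff d) : ℝ :=
  Real.sqrt (∑' k : {k : Fin d → ℤ // k ≠ 0},
    latNorm (k : Fin d → ℤ) ^ (2 * m) * cNorm (v (k : Fin d → ℤ)) ^ 2)

/-- Membership in the Sobolev space `H^m` (finiteness of the norm). -/
def inHm {d : ℕ} (m : ℝ) (v : Coeff d) : Prop :=
  Summable (fun k : {k : Fin d → ℤ // k ≠ 0} =>
    latNorm (k : Fin d → ℤ) ^ (2 * m) * cNorm (v (k : Fin d → ℤ)) ^ 2)

/-- Divergence-free: `k · v_k = 0` for all `k`. -/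
def divFree {d : ℕ} (v : Coeff d) : Prop := ∀ k, dotC k (v k) = 0

/-- Mean zero: `v_0 = 0`. -/
def meanZero {d : ℕ} (v : Coeff d) : Prop := v 0 = 0

/-- Reality of the field: `v_{-k} = conj(v_k)`. -/
def realField {d : ℕ} (v : Coeff d) : Prop :=
  ∀ k i, v (-k) i = starRingEnd ℂ (v k i)

/-- The Fourier coefficients of the Leray-projected advection term `P(v,w) = Π(v·∂w)`:
`P(v,w)_k = (i/(2π)^{d/2}) Σ_h (v_h · (k-h)) Π_k w_{k-h}`. -/
def Pcoef {d : ℕ} (v w : Coeff d) : Coeff d := fun k i =>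
  Complex.I / ((2 * Real.pi : ℝ) ^ ((d : ℝ) / 2) : ℝ) *
    ∑' h : Fin d → ℤ, dotC (k - h) (v h) * leray k (w (k - h)) i

/-- `K` is an admissible constant for the tame inequality
`‖P(v,w)‖_p ≤ (K/2)(‖v‖_p ‖w‖_{n+1} + ‖v‖_n ‖w‖_{p+1})` over all divergence-free
mean-zero real fields `v ∈ H^p`, `w ∈ H^{p+1}`. -/
def tameIneq (d : ℕ) (p n K : ℝ) : Prop :=
  ∀ v w : Coeff d, divFree v → divFree w → meanZero v → meanZero w →
    realField v → realField w → inHm p v → inHm (p + 1) w →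
    sobNorm p (Pcoef v w) ≤
      K / 2 * (sobNorm p v * sobNorm (n + 1) w + sobNorm n v * sobNorm (p + 1) w)

section Helpers

lemma sum_ite_coe {M : Type*} [AddCommMonoid M] {d m : ℕ} (hm : m < d) (x : Fin d → M) :
    (∑ i : Fin d, if (i : ℕ) = m then x i else 0) = x ⟨m, hm⟩ := by
  have h : ∀ i : Fin d, (if (i : ℕ) = m then x i else 0) = (if i = ⟨m, hm⟩ then x i else 0) := by
    intro i
    refine if_congr ⟨fun h => Fin.ext h, fun h => by rw [h]⟩ rfl rfl
  rw [Finset.sum_congr rfl fun i _ => h i, Finset.sum_ite_eq' Finset.univ,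
    if_pos (Finset.mem_univ _)]

lemma cNorm_zero {d : ℕ} : cNorm (0 : Fin d → ℂ) = 0 := by
  simp [cNorm]

lemma cNorm_single {d m : ℕ} (hm : m < d) (c : ℂ) :
    cNorm (fun i : Fin d => if (i : ℕ) = m then c else 0) = ‖c‖ := by
  unfold cNorm
  have h : ∀ i : Fin d, ‖(if (i:ℕ) = m then c else 0)‖ ^ 2
       = (if (i:ℕ) = m then ‖c‖ ^ 2 else 0) := by
    intro i; split <;> simp
  rw [Finset.sum_congr rfl fun i _ => h i, sum_ite_coe hm]
  exact Real.sqrt_sq (norm_nonneg c)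

lemma leray_zero {d : ℕ} (k : Fin d → ℤ) : leray k (0 : Fin d → ℂ) = 0 := by
  unfold leray
  split
  · rfl
  · funext i; simp [dotC]

lemma leray_dot_zero {d : ℕ} {k : Fin d → ℤ} {a : Fin d → ℂ} (h : dotC k a = 0) :
    leray k a = a := by
  unfold leray
  split
  · rfl
  · funext i; rw [h]; simp

lemma dotC_single {d r : ℕ} (hr : r < d) (c : Fin d → ℤ) (z : ℂ) :
    dotC c (fun j : Fin d => if (j:ℕ) = r then z else 0) = (c ⟨r, hr⟩ : ℂ) * z := by
  unfold dotC
  have h : ∀ j : Fin d, (c j : ℂ) * (if (j:ℕ) = r then z else 0)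
      = (if (j:ℕ) = r then (c j : ℂ) * z else 0) := by
    intro j; split <;> simp
  rw [Finset.sum_congr rfl fun j _ => h j, sum_ite_coe hr]

lemma latNorm_neg {d : ℕ} (k : Fin d → ℤ) : latNorm (-k) = latNorm k := by
  unfold latNorm
  congr 1
  refine Finset.sum_congr rfl fun i _ => ?_
  simp [neg_sq]

lemma latNorm_single {d q : ℕ} (hq : q < d) (a : Fin d → ℤ)
    (ha : a = fun i : Fin d => if (i:ℕ) = q then (1:ℤ) else 0) : latNorm a = 1 := by
  unfold latNorm
  have h : ∀ i : Fin d, ((a i : ℝ)) ^ 2 = (if (i:ℕ) = q then (1:ℝ) else 0) := by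
    intro i; rw [ha]; by_cases h : (i:ℕ) = q <;> simp [h]
  rw [Finset.sum_congr rfl fun i _ => h i, sum_ite_coe hq]
  exact Real.sqrt_one

end Helpers

section Single

variable {d q r : ℕ}

lemma single_ne_zero (hq : q < d) (a : Fin d → ℤ)
    (ha : a = fun i : Fin d => if (i:ℕ) = q then (1:ℤ) else 0) : a ≠ 0 := by
  intro h
  have := congrFun h ⟨q, hq⟩
  rw [ha] at this
  simp at this

lemma single_ne_neg (hq : q < d) (a : Fin d → ℤ)
    (ha : a = fun i : Fin d => if (i:ℕ) = q then (1:ℤ) else 0) : a ≠ -a := by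
  intro h
  have := congrFun h ⟨q, hq⟩
  rw [ha] at this
  simp at this

lemma single_coef_values (hq : q < d) (hr : r < d) (a : Fin d → ℤ) (V : Coeff d)
    (ha : a = fun i : Fin d => if (i:ℕ) = q then (1:ℤ) else 0)
    (hV : V = fun (k : Fin d → ℤ) (j : Fin d) =>
      if k = a ∧ (j : ℕ) = r then Complex.I
      else if k = -a ∧ (j : ℕ) = r then -Complex.I else 0) :
    (V a = fun j : Fin d => if (j:ℕ) = r then Complex.I else 0) ∧
    (V (-a) = fun j : Fin d => if (j:ℕ) = r then -Complex.I else 0) ∧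
    (∀ k, k ≠ a → k ≠ -a → V k = 0) := by
  have hne := single_ne_neg hq a ha
  refine ⟨?_, ?_, ?_⟩
  · funext j
    by_cases hj : (j:ℕ) = r <;> simp [hV, hj, hne]
  · funext j
    by_cases hj : (j:ℕ) = r <;> simp [hV, hj, Ne.symm hne, fun (h : a = -a) => hne h]
  · intro k hk1 hk2
    funext j
    simp [hV, hk1, hk2]

lemma sob_single (hq : q < d) (hr : r < d) (m : ℝ) (a : Fin d → ℤ) (V : Coeff d)
    (ha : a = fun i : Fin d => if (i:ℕ) = q then (1:ℤ) else 0)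
    (hV : V = fun (k : Fin d → ℤ) (j : Fin d) =>
      if k = a ∧ (j : ℕ) = r then Complex.I
      else if k = -a ∧ (j : ℕ) = r then -Complex.I else 0) :
    sobNorm m V = Real.sqrt 2 := by
  obtain ⟨hVa, hVna, hV0⟩ := single_coef_values hq hr a V ha hV
  have ha0 : a ≠ 0 := single_ne_zero hq a ha
  have hna0 : -a ≠ 0 := fun h => ha0 (by simpa using congrArg Neg.neg h)
  have hne : a ≠ -a := single_ne_neg hq a ha
  have hsub : (⟨a, ha0⟩ : {k : Fin d → ℤ // k ≠ 0}) ≠ ⟨-a, hna0⟩ := by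
    intro h; exact hne (congrArg Subtype.val h)
  unfold sobNorm
  rw [tsum_eq_sum (s := {⟨a, ha0⟩, ⟨-a, hna0⟩})
    (by
      rintro ⟨k, hk⟩ hks
      simp only [Finset.mem_insert, Finset.mem_singleton] at hks
      push_neg at hks
      have h1 : k ≠ a := fun h => hks.1 (Subtype.ext h)
      have h2 : k ≠ -a := fun h => hks.2 (Subtype.ext h)
      rw [hV0 k h1 h2, cNorm_zero]
      ring)]
  rw [Finset.sum_pair hsub]
  have hla : latNorm a = 1 := latNorm_single hq a ha
  have hlna : latNorm (-a) = 1 := by rw [latNorm_neg, hla]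
  have hca : cNorm (V a) = 1 := by rw [hVa, cNorm_single hr]; simp
  have hcna : cNorm (V (-a)) = 1 := by rw [hVna, cNorm_single hr]; simp
  simp only [hla, hlna, hca, hcna]
  norm_num [Real.one_rpow]

lemma inHm_single (hq : q < d) (hr : r < d) (m : ℝ) (a : Fin d → ℤ) (V : Coeff d)
    (ha : a = fun i : Fin d => if (i:ℕ) = q then (1:ℤ) else 0)
    (hV : V = fun (k : Fin d → ℤ) (j : Fin d) =>
      if k = a ∧ (j : ℕ) = r then Complex.I
      else if k = -a ∧ (j : ℕ) = r then -Complex.I else 0) :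
    inHm m V := by
  obtain ⟨-, -, hV0⟩ := single_coef_values hq hr a V ha hV
  have ha0 : a ≠ 0 := single_ne_zero hq a ha
  have hna0 : -a ≠ 0 := fun h => ha0 (by simpa using congrArg Neg.neg h)
  refine summable_of_ne_finset_zero (s := {⟨a, ha0⟩, ⟨-a, hna0⟩}) ?_
  rintro ⟨k, hk⟩ hks
  simp only [Finset.mem_insert, Finset.mem_singleton] at hks
  push_neg at hks
  have h1 : k ≠ a := fun h => hks.1 (Subtype.ext h)
  have h2 : k ≠ -a := fun h => hks.2 (Subtype.ext h)
  rw [hV0 k h1 h2, cNorm_zero]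
  ring

end Single

section Single2

variable {d q r : ℕ}

lemma dotC_zero {d : ℕ} (c : Fin d → ℤ) : dotC c (0 : Fin d → ℂ) = 0 := by
  simp [dotC]

lemma divFree_single (hq : q < d) (hr : r < d) (hqr : q ≠ r) (a : Fin d → ℤ) (V : Coeff d)
    (ha : a = fun i : Fin d => if (i:ℕ) = q then (1:ℤ) else 0)
    (hV : V = fun (k : Fin d → ℤ) (j : Fin d) =>
      if k = a ∧ (j : ℕ) = r then Complex.I
      else if k = -a ∧ (j : ℕ) = r then -Complex.I else 0) :
    divFree V := by
  obtain ⟨hVa, hVna, hV0⟩ := single_coef_values hq hr a V ha hV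
  have har : a ⟨r, hr⟩ = 0 := by rw [ha]; simp [Ne.symm hqr]
  intro k
  by_cases h1 : k = a
  · subst h1
    rw [hVa, dotC_single hr, har]
    simp
  by_cases h2 : k = -a
  · subst h2
    rw [hVna, dotC_single hr]
    simp [har]
  · rw [hV0 k h1 h2, dotC_zero]

lemma meanZero_single (hq : q < d) (hr : r < d) (a : Fin d → ℤ) (V : Coeff d)
    (ha : a = fun i : Fin d => if (i:ℕ) = q then (1:ℤ) else 0)
    (hV : V = fun (k : Fin d → ℤ) (j : Fin d) =>
      if k = a ∧ (j : ℕ) = r then Complex.I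
      else if k = -a ∧ (j : ℕ) = r then -Complex.I else 0) :
    meanZero V := by
  obtain ⟨-, -, hV0⟩ := single_coef_values hq hr a V ha hV
  have ha0 : a ≠ 0 := single_ne_zero hq a ha
  exact hV0 0 (Ne.symm ha0) (fun h => ha0 (by simpa using congrArg Neg.neg h.symm))

lemma realField_single (hq : q < d) (hr : r < d) (a : Fin d → ℤ) (V : Coeff d)
    (ha : a = fun i : Fin d => if (i:ℕ) = q then (1:ℤ) else 0)
    (hV : V = fun (k : Fin d → ℤ) (j : Fin d) =>
      if k = a ∧ (j : ℕ) = r then Complex.I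
      else if k = -a ∧ (j : ℕ) = r then -Complex.I else 0) :
    realField V := by
  obtain ⟨hVa, hVna, hV0⟩ := single_coef_values hq hr a V ha hV
  intro k i
  by_cases h1 : k = a
  · subst h1
    rw [hVa, hVna]
    by_cases hi : (i:ℕ) = r <;> simp [hi]
  by_cases h2 : k = -a
  · subst h2
    rw [neg_neg, hVa, hVna]
    by_cases hi : (i:ℕ) = r <;> simp [hi]
  · have h3 : -k ≠ a := fun h => h2 (by rw [← h, neg_neg])
    have h4 : -k ≠ -a := fun h => h1 (by simpa using congrArg Neg.neg h)
    rw [hV0 k h1 h2, hV0 (-k) h3 h4]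
    simp

lemma latNorm_two {d : ℕ} (h0 : 0 < d) (h1 : 1 < d) (k : Fin d → ℤ)
    (hk0 : (k ⟨0, h0⟩) ^ 2 = 1) (hk1 : (k ⟨1, h1⟩) ^ 2 = 1)
    (hk : ∀ i : Fin d, (i:ℕ) ≠ 0 → (i:ℕ) ≠ 1 → k i = 0) :
    latNorm k = Real.sqrt 2 := by
  unfold latNorm
  congr 1
  have h : ∀ i : Fin d, ((k i : ℝ)) ^ 2
      = (if (i:ℕ) = 0 then (1:ℝ) else 0) + (if (i:ℕ) = 1 then (1:ℝ) else 0) := by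
    intro i
    by_cases hi0 : (i:ℕ) = 0
    · have : i = ⟨0, h0⟩ := Fin.ext hi0
      subst this
      have : ((k ⟨0, h0⟩ : ℝ)) ^ 2 = 1 := by exact_mod_cast hk0
      simpa using this
    by_cases hi1 : (i:ℕ) = 1
    · have : i = ⟨1, h1⟩ := Fin.ext hi1
      subst this
      have : ((k ⟨1, h1⟩ : ℝ)) ^ 2 = 1 := by exact_mod_cast hk1
      simpa [hi0] using this
    · rw [hk i hi0 hi1]
      simp [hi0, hi1]
  rw [Finset.sum_congr rfl fun i _ => h i, Finset.sum_add_distrib,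
    sum_ite_coe h0, sum_ite_coe h1]
  norm_num

end Single2

/-- Let `d ≥ 3`, `p ≥ n > d/2`. With `a, b` the first two standard basis
vectors of `ℤ^d` and `v = i e₂ (e_a - e_{-a})`, `w = i e₃ (e_b - e_{-b})` (in Fourier
coefficients: `V` is `i e₂` at `k = a`, `-i e₂` at `k = -a`, `0` otherwise, and similarly
`W` with `e₃` and `b`), one has `‖v‖_m = ‖w‖_m = √2` for all real `m`,
`‖P(v,w)‖_p = 2^{p/2+1}/(2π)^{d/2}`, and consequently every constant `K` fulfilling the
tame inequality satisfies `K ≥ 2^{p/2}/(2π)^{d/2}`. -/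
theorem lower_bound_basic_trial (d : ℕ) (hd : 3 ≤ d) (p n : ℝ) (hpn : n ≤ p)
    (hn : (d : ℝ) / 2 < n) (a b : Fin d → ℤ)
    (ha : a = fun (i : Fin d) => if (i : ℕ) = 0 then 1 else 0)
    (hb : b = fun (i : Fin d) => if (i : ℕ) = 1 then 1 else 0)
    (V W : Coeff d)
    (hV : V = fun (k : Fin d → ℤ) (j : Fin d) =>
      if k = a ∧ (j : ℕ) = 1 then Complex.I
      else if k = -a ∧ (j : ℕ) = 1 then -Complex.I else 0)
    (hW : W = fun (k : Fin d → ℤ) (j : Fin d) =>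
      if k = b ∧ (j : ℕ) = 2 then Complex.I
      else if k = -b ∧ (j : ℕ) = 2 then -Complex.I else 0) :
    (∀ m : ℝ, sobNorm m V = Real.sqrt 2 ∧ sobNorm m W = Real.sqrt 2) ∧
    sobNorm p (Pcoef V W) = 2 ^ (p / 2 + 1) / (2 * Real.pi) ^ ((d : ℝ) / 2) ∧
    ∀ K : ℝ, tameIneq d p n K → 2 ^ (p / 2) / (2 * Real.pi) ^ ((d : ℝ) / 2) ≤ K := by
  have h0 : 0 < d := by omega
  have h1 : 1 < d := by omega
  have h2 : 2 < d := by omega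
  have ha' : a = fun i : Fin d => if (i:ℕ) = 0 then (1:ℤ) else 0 := ha
  have hb' : b = fun i : Fin d => if (i:ℕ) = 1 then (1:ℤ) else 0 := hb
  obtain ⟨hVa, hVna, hV0⟩ := single_coef_values h0 h1 a V ha' hV
  obtain ⟨hWb, hWnb, hW0⟩ := single_coef_values h1 h2 b W hb' hW
  have sobV : ∀ m, sobNorm m V = Real.sqrt 2 := fun m => sob_single h0 h1 m a V ha' hV
  have sobW : ∀ m, sobNorm m W = Real.sqrt 2 := fun m => sob_single h1 h2 m b W hb' hW
  have hane : a ≠ -a := single_ne_neg h0 a ha'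
  -- the reduced formula for Pcoef
  have hPsum : ∀ (k : Fin d → ℤ) (i : Fin d), Pcoef V W k i =
      Complex.I / ((2 * Real.pi : ℝ) ^ ((d : ℝ) / 2) : ℝ) *
      (dotC (k - a) (V a) * leray k (W (k - a)) i +
       dotC (k + a) (V (-a)) * leray k (W (k + a)) i) := by
    intro k i
    have hsupp : ∀ h ∉ ({a, -a} : Finset (Fin d → ℤ)),
        dotC (k - h) (V h) * leray k (W (k - h)) i = 0 := by
      intro h hh
      simp only [Finset.mem_insert, Finset.mem_singleton] at hh
      push_neg at hh
      rw [hV0 h hh.1 hh.2, dotC_zero, zero_mul]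
    simp only [Pcoef]
    rw [tsum_eq_sum hsupp, Finset.sum_pair hane, sub_neg_eq_add]
  -- values vanish off the four points
  have hPker : ∀ k : Fin d → ℤ, k ≠ a + b → k ≠ a - b → k ≠ -a + b → k ≠ -a - b →
      Pcoef V W k = 0 := by
    intro k n1 n2 n3 n4
    funext i
    have w1 : W (k - a) = 0 := by
      refine hW0 _ ?_ ?_
      · intro h; apply n1; rw [eq_add_of_sub_eq h]; ring
      · intro h; apply n2; rw [eq_add_of_sub_eq h]; ring
    have w2 : W (k + a) = 0 := by
      refine hW0 _ ?_ ?_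
      · intro h; apply n3; rw [eq_sub_of_add_eq h]; ring
      · intro h; apply n4; rw [eq_sub_of_add_eq h]; ring
    rw [hPsum, w1, w2, leray_zero]
    simp
  -- component facts
  have hb1 : b ⟨1, h1⟩ = 1 := by rw [hb']; simp
  have hnb1 : (-b) ⟨1, h1⟩ = -1 := by rw [hb']; simp
  have hc1 : (a + b) ⟨2, h2⟩ = 0 := by rw [ha', hb']; simp
  have hc2 : (a - b) ⟨2, h2⟩ = 0 := by rw [ha', hb']; simp
  have hc3 : (-a + b) ⟨2, h2⟩ = 0 := by rw [ha', hb']; simp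
  have hc4 : (-a - b) ⟨2, h2⟩ = 0 := by rw [ha', hb']; simp
  have hne_b : ∀ x : Fin d → ℤ, x ⟨0, h0⟩ ≠ 0 → x ≠ b ∧ x ≠ -b := by
    intro x hx
    constructor <;> intro h <;> apply hx <;> rw [h] <;> rw [hb'] <;> simp
  have hx1 : (a + b + a) ⟨0, h0⟩ ≠ 0 := by rw [ha', hb']; simp
  have hx2 : (a - b + a) ⟨0, h0⟩ ≠ 0 := by rw [ha', hb']; simp
  have hx3 : (-a + b - a) ⟨0, h0⟩ ≠ 0 := by rw [ha', hb']; simp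
  have hx4 : (-a - b - a) ⟨0, h0⟩ ≠ 0 := by rw [ha', hb']; simp
  have hCpos : (0:ℝ) < (2 * Real.pi) ^ ((d:ℝ)/2) := Real.rpow_pos_of_pos (by positivity) _
  -- the four values
  have hP1 : Pcoef V W (a + b) = fun i : Fin d => if (i:ℕ) = 2 then
      Complex.I / ((2 * Real.pi : ℝ) ^ ((d : ℝ) / 2) : ℝ) * (Complex.I * Complex.I) else 0 := by
    funext i
    rw [hPsum]
    have e1 : a + b - a = b := by ring
    have e2 := hne_b _ hx1
    rw [e1, hW0 _ e2.1 e2.2, leray_zero]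
    have hd1 : dotC b (V a) = Complex.I := by
      rw [hVa, dotC_single h1, hb1]; simp
    have hl : leray (a + b) (W b) = W b := by
      apply leray_dot_zero
      rw [hWb, dotC_single h2, hc1]; simp
    rw [hd1, hl, hWb]
    by_cases hi : (i:ℕ) = 2 <;> simp [hi]
  have hP2 : Pcoef V W (a - b) = fun i : Fin d => if (i:ℕ) = 2 then
      Complex.I / ((2 * Real.pi : ℝ) ^ ((d : ℝ) / 2) : ℝ) * (-Complex.I * -Complex.I) else 0 := by
    funext i
    rw [hPsum]
    have e1 : a - b - a = -b := by ring
    have e2 := hne_b _ hx2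
    rw [e1, hW0 _ e2.1 e2.2, leray_zero]
    have hd1 : dotC (-b) (V a) = -Complex.I := by
      rw [hVa, dotC_single h1, hnb1]; simp
    have hl : leray (a - b) (W (-b)) = W (-b) := by
      apply leray_dot_zero
      rw [hWnb, dotC_single h2, hc2]; simp
    rw [hd1, hl, hWnb]
    by_cases hi : (i:ℕ) = 2 <;> simp [hi]
  have hP3 : Pcoef V W (-a + b) = fun i : Fin d => if (i:ℕ) = 2 then
      Complex.I / ((2 * Real.pi : ℝ) ^ ((d : ℝ) / 2) : ℝ) * (-Complex.I * Complex.I) else 0 := by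
    funext i
    rw [hPsum]
    have e1 : -a + b + a = b := by ring
    have e2 := hne_b _ hx3
    rw [e1, hW0 _ e2.1 e2.2, leray_zero]
    have hd1 : dotC b (V (-a)) = -Complex.I := by
      rw [hVna, dotC_single h1, hb1]; simp
    have hl : leray (-a + b) (W b) = W b := by
      apply leray_dot_zero
      rw [hWb, dotC_single h2, hc3]; simp
    rw [hd1, hl, hWb]
    by_cases hi : (i:ℕ) = 2 <;> simp [hi]
  have hP4 : Pcoef V W (-a - b) = fun i : Fin d => if (i:ℕ) = 2 then
      Complex.I / ((2 * Real.pi : ℝ) ^ ((d : ℝ) / 2) : ℝ) * (Complex.I * -Complex.I) else 0 := by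
    funext i
    rw [hPsum]
    have e1 : -a - b + a = -b := by ring
    have e2 := hne_b _ hx4
    rw [e1, hW0 _ e2.1 e2.2, leray_zero]
    have hd1 : dotC (-b) (V (-a)) = Complex.I := by
      rw [hVna, dotC_single h1, hnb1]; simp
    have hl : leray (-a - b) (W (-b)) = W (-b) := by
      apply leray_dot_zero
      rw [hWnb, dotC_single h2, hc4]; simp
    rw [hd1, hl, hWnb]
    by_cases hi : (i:ℕ) = 2 <;> simp [hi]
  -- cNorm values
  have habs : ∀ z : ℂ, ‖z‖ = 1 →
      cNorm (fun i : Fin d => if (i:ℕ) = 2 then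
        Complex.I / ((2 * Real.pi : ℝ) ^ ((d : ℝ) / 2) : ℝ) * z else 0)
      = 1 / (2 * Real.pi) ^ ((d:ℝ)/2) := by
    intro z hz
    rw [cNorm_single h2, norm_mul, norm_div, Complex.norm_I, Complex.norm_real, Real.norm_eq_abs, hz,
      mul_one, abs_of_pos hCpos]
  have hcn1 : cNorm (Pcoef V W (a + b)) = 1 / (2 * Real.pi) ^ ((d:ℝ)/2) := by
    rw [hP1]; exact habs _ (by simp)
  have hcn2 : cNorm (Pcoef V W (a - b)) = 1 / (2 * Real.pi) ^ ((d:ℝ)/2) := by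
    rw [hP2]; exact habs _ (by simp)
  have hcn3 : cNorm (Pcoef V W (-a + b)) = 1 / (2 * Real.pi) ^ ((d:ℝ)/2) := by
    rw [hP3]; exact habs _ (by simp)
  have hcn4 : cNorm (Pcoef V W (-a - b)) = 1 / (2 * Real.pi) ^ ((d:ℝ)/2) := by
    rw [hP4]; exact habs _ (by simp)
  -- latNorm values
  have hl1 : latNorm (a + b) = Real.sqrt 2 := by
    refine latNorm_two h0 h1 _ ?_ ?_ ?_
    · rw [ha', hb']; simp
    · rw [ha', hb']; simp
    · intro i hi0 hi1; rw [ha', hb']; simp [hi0, hi1]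
  have hl2 : latNorm (a - b) = Real.sqrt 2 := by
    refine latNorm_two h0 h1 _ ?_ ?_ ?_
    · rw [ha', hb']; simp
    · rw [ha', hb']; simp
    · intro i hi0 hi1; rw [ha', hb']; simp [hi0, hi1]
  have hl3 : latNorm (-a + b) = Real.sqrt 2 := by
    refine latNorm_two h0 h1 _ ?_ ?_ ?_
    · rw [ha', hb']; simp
    · rw [ha', hb']; simp
    · intro i hi0 hi1; rw [ha', hb']; simp [hi0, hi1]
  have hl4 : latNorm (-a - b) = Real.sqrt 2 := by
    refine latNorm_two h0 h1 _ ?_ ?_ ?_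
    · rw [ha', hb']; simp
    · rw [ha', hb']; simp
    · intro i hi0 hi1; rw [ha', hb']; simp [hi0, hi1]
  -- nonzero and distinct
  have hz1 : a + b ≠ 0 := by
    intro h; have h' := congrFun h ⟨0, h0⟩; rw [ha', hb'] at h'; simp at h'
  have hz2 : a - b ≠ 0 := by
    intro h; have h' := congrFun h ⟨0, h0⟩; rw [ha', hb'] at h'; simp at h'
  have hz3 : -a + b ≠ 0 := by
    intro h; have h' := congrFun h ⟨1, h1⟩; rw [ha', hb'] at h'; simp at h'
  have hz4 : -a - b ≠ 0 := by
    intro h; have h' := congrFun h ⟨0, h0⟩; rw [ha', hb'] at h'; simp at h'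
  have d12 : a + b ≠ a - b := by
    intro h; have h' := congrFun h ⟨1, h1⟩; rw [ha', hb'] at h'; simp at h'
  have d13 : a + b ≠ -a + b := by
    intro h; have h' := congrFun h ⟨0, h0⟩; rw [ha', hb'] at h'; simp at h'
  have d14 : a + b ≠ -a - b := by
    intro h; have h' := congrFun h ⟨0, h0⟩; rw [ha', hb'] at h'; simp at h'
  have d23 : a - b ≠ -a + b := by
    intro h; have h' := congrFun h ⟨0, h0⟩; rw [ha', hb'] at h'; simp at h'
  have d24 : a - b ≠ -a - b := by
    intro h; have h' := congrFun h ⟨0, h0⟩; rw [ha', hb'] at h'; simp at h'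
  have d34 : -a + b ≠ -a - b := by
    intro h; have h' := congrFun h ⟨1, h1⟩; rw [ha', hb'] at h'; simp at h'
  -- the sobolev norm of Pcoef
  have e2 : ((2:ℝ) ^ (p/2+1)) ^ 2 = 4 * 2 ^ p := by
    rw [sq, ← Real.rpow_add (by norm_num : (0:ℝ) < 2),
      show p/2+1+(p/2+1) = p + 1 + 1 from by ring,
      Real.rpow_add (by norm_num : (0:ℝ) < 2),
      Real.rpow_add (by norm_num : (0:ℝ) < 2), Real.rpow_one]
    ring
  have Fval : ∀ (k : Fin d → ℤ) (hzk : k ≠ 0), latNorm k = Real.sqrt 2 →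
      cNorm (Pcoef V W k) = 1 / (2 * Real.pi) ^ ((d:ℝ)/2) →
      latNorm ((⟨k, hzk⟩ : {k : Fin d → ℤ // k ≠ 0}) : Fin d → ℤ) ^ (2*p) *
        cNorm (Pcoef V W ((⟨k, hzk⟩ : {k : Fin d → ℤ // k ≠ 0}) : Fin d → ℤ)) ^ 2
      = 2 ^ p * (1 / (2 * Real.pi) ^ ((d:ℝ)/2)) ^ 2 := by
    intro k hzk hlat hcn
    show latNorm k ^ (2*p) * cNorm (Pcoef V W k) ^ 2 = _
    rw [hlat, hcn, Real.sqrt_eq_rpow, ← Real.rpow_mul (by norm_num : (0:ℝ) ≤ 2),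
      show 1/2 * (2*p) = p from by ring]
  have hsob : sobNorm p (Pcoef V W) = 2 ^ (p / 2 + 1) / (2 * Real.pi) ^ ((d : ℝ) / 2) := by
    unfold sobNorm
    have hsupp : ∀ k : {k : Fin d → ℤ // k ≠ 0},
        k ∉ ({⟨a+b, hz1⟩, ⟨a-b, hz2⟩, ⟨-a+b, hz3⟩, ⟨-a-b, hz4⟩} :
          Finset {k : Fin d → ℤ // k ≠ 0}) →
        latNorm (k : Fin d → ℤ) ^ (2*p) * cNorm (Pcoef V W (k : Fin d → ℤ)) ^ 2 = 0 := by
      rintro ⟨k, hk⟩ hks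
      simp only [Finset.mem_insert, Finset.mem_singleton] at hks
      push_neg at hks
      rw [hPker k (fun h => hks.1 (Subtype.ext h)) (fun h => hks.2.1 (Subtype.ext h))
        (fun h => hks.2.2.1 (Subtype.ext h)) (fun h => hks.2.2.2 (Subtype.ext h)),
        cNorm_zero]
      ring
    rw [tsum_eq_sum hsupp]
    have m12 : (⟨a+b, hz1⟩ : {k : Fin d → ℤ // k ≠ 0}) ≠ ⟨a-b, hz2⟩ :=
      fun h => d12 (congrArg Subtype.val h)
    have m13 : (⟨a+b, hz1⟩ : {k : Fin d → ℤ // k ≠ 0}) ≠ ⟨-a+b, hz3⟩ :=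
      fun h => d13 (congrArg Subtype.val h)
    have m14 : (⟨a+b, hz1⟩ : {k : Fin d → ℤ // k ≠ 0}) ≠ ⟨-a-b, hz4⟩ :=
      fun h => d14 (congrArg Subtype.val h)
    have m23 : (⟨a-b, hz2⟩ : {k : Fin d → ℤ // k ≠ 0}) ≠ ⟨-a+b, hz3⟩ :=
      fun h => d23 (congrArg Subtype.val h)
    have m24 : (⟨a-b, hz2⟩ : {k : Fin d → ℤ // k ≠ 0}) ≠ ⟨-a-b, hz4⟩ :=
      fun h => d24 (congrArg Subtype.val h)
    have m34 : (⟨-a+b, hz3⟩ : {k : Fin d → ℤ // k ≠ 0}) ≠ ⟨-a-b, hz4⟩ :=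
      fun h => d34 (congrArg Subtype.val h)
    rw [Finset.sum_insert (by simp [m12, m13, m14]),
      Finset.sum_insert (by simp [m23, m24]),
      Finset.sum_pair m34,
      Fval _ hz1 hl1 hcn1, Fval _ hz2 hl2 hcn2, Fval _ hz3 hl3 hcn3, Fval _ hz4 hl4 hcn4]
    rw [show (2:ℝ) ^ (p / 2 + 1) / (2 * Real.pi) ^ ((d : ℝ) / 2)
        = Real.sqrt (((2:ℝ) ^ (p / 2 + 1) / (2 * Real.pi) ^ ((d : ℝ) / 2)) ^ 2) from
      (Real.sqrt_sq (by positivity)).symm]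
    congr 1
    have e3 : ((2:ℝ) ^ (p / 2 + 1) / (2 * Real.pi) ^ ((d:ℝ) / 2)) ^ 2
        = 4 * 2 ^ p / ((2 * Real.pi) ^ ((d:ℝ) / 2)) ^ 2 := by
      rw [div_pow, e2]
    rw [e3]
    ring
  refine ⟨fun m => ⟨sobV m, sobW m⟩, hsob, ?_⟩
  intro K hK
  have h := hK V W (divFree_single h0 h1 (by norm_num) a V ha' hV)
    (divFree_single h1 h2 (by norm_num) b W hb' hW)
    (meanZero_single h0 h1 a V ha' hV) (meanZero_single h1 h2 b W hb' hW)
    (realField_single h0 h1 a V ha' hV) (realField_single h1 h2 b W hb' hW)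
    (inHm_single h0 h1 p a V ha' hV) (inHm_single h1 h2 (p+1) b W hb' hW)
  rw [hsob, sobV p, sobV n, sobW (n+1), sobW (p+1),
    Real.mul_self_sqrt (by norm_num : (0:ℝ) ≤ 2)] at h
  rw [show p/2 + 1 = p/2 + 1 from rfl] at h
  have hsplit : (2:ℝ) ^ (p/2+1) = 2 * 2 ^ (p/2) := by
    rw [Real.rpow_add (by norm_num : (0:ℝ) < 2), Real.rpow_one]; ring
  rw [hsplit] at h
  rw [div_le_iff₀ hCpos] at h ⊢
  linarith
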